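/- Let M and N be metric spaces and let φ: N → M be a Lipschitz map whose least Lipschitz constant is at most 1. Let A be a subset of {(x,y) ∈ M × M : x ≠ y} such that: (1) for every Lipschitz function f: M → ℝ one has ‖f‖ = sup{(f(x) − f(y))/d(x,y) : (x,y) ∈ A}; and (2) for every (x,y) ∈ A there exist sequences (x_n), (y_n) in N with φ(x_n) ≠ φ(y_n) for every n, φ(x_n) → x, φ(y_n) → y, and d(φ(x_n), φ(y_n))/d(x_n, y_n) → 1. Then for every Lipschitz function f: M → ℝ one has ‖f ∘ φ‖ = ‖f‖, i.e. the composition operator C_φ is isometric. -/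

import Mathlib

open Filter Topology

/-- The least Lipschitz constant (Lipschitz norm) of a real-valued function on a metric
space, expressed as `sup {(f x - f y)/d(x,y) : x ≠ y}`. -/
noncomputable def lipNorm {M : Type*} [MetricSpace M] (f : M → ℝ) : ℝ :=
  sSup {r : ℝ | ∃ x y : M, x ≠ y ∧ r = (f x - f y) / dist x y}

lemma lip_mem_ub {M : Type*} [MetricSpace M] {f : M → ℝ} {K : NNReal} (hf : LipschitzWith K f)
    {r : ℝ} (hr : r ∈ {r : ℝ | ∃ x y : M, x ≠ y ∧ r = (f x - f y) / dist x y}) : r ≤ (K : ℝ) := by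
  obtain ⟨x, y, hxy, rfl⟩ := hr
  have hd : (0:ℝ) < dist x y := dist_pos.2 hxy
  rw [div_le_iff₀ hd]
  calc f x - f y ≤ |f x - f y| := le_abs_self _
    _ ≤ (K : ℝ) * dist x y := by
        have := hf.dist_le_mul x y
        rwa [Real.dist_eq] at this

lemma lip_bdd {M : Type*} [MetricSpace M] {f : M → ℝ} {K : NNReal} (hf : LipschitzWith K f) :
    BddAbove {r : ℝ | ∃ x y : M, x ≠ y ∧ r = (f x - f y) / dist x y} :=
  ⟨K, fun _ hr => lip_mem_ub hf hr⟩

lemma lipNorm_nonneg {M : Type*} [MetricSpace M] {f : M → ℝ} {K : NNReal}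
    (hf : LipschitzWith K f) : 0 ≤ lipNorm f := by
  unfold lipNorm
  rcases Set.eq_empty_or_nonempty {r : ℝ | ∃ x y : M, x ≠ y ∧ r = (f x - f y) / dist x y} with h | h
  · rw [h, Real.sSup_empty]
  · obtain ⟨r, x, y, hxy, rfl⟩ := h
    have h1 := le_csSup (lip_bdd hf) (⟨x, y, hxy, rfl⟩ :
      (f x - f y) / dist x y ∈ {r : ℝ | ∃ x y : M, x ≠ y ∧ r = (f x - f y) / dist x y})
    have h2 := le_csSup (lip_bdd hf) (⟨y, x, hxy.symm, by rw [dist_comm]⟩ :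
      (f y - f x) / dist x y ∈ {r : ℝ | ∃ x y : M, x ≠ y ∧ r = (f x - f y) / dist x y})
    have h3 : (f x - f y) / dist x y + (f y - f x) / dist x y = 0 := by
      rw [← add_div]; ring_nf
    linarith

/-- If `φ : N → M` is `1`-Lipschitz, `A ⊆ {(x,y) : x ≠ y}` is such that
the molecules over `A` are norming for Lipschitz functions over `M`, and for every
`(x,y) ∈ A` there are sequences `xₙ, yₙ` in `N` with `φ(xₙ) ≠ φ(yₙ)`, `φ(xₙ) → x`,
`φ(yₙ) → y` and `d(φ(xₙ),φ(yₙ))/d(xₙ,yₙ) → 1`, then the composition operator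
`C_φ : f ↦ f ∘ φ` is isometric. -/
theorem stmt0 {M N : Type*} [MetricSpace M] [MetricSpace N]
    (φ : N → M) (hφ : LipschitzWith 1 φ)
    (A : Set (M × M)) (hA : ∀ p ∈ A, p.1 ≠ p.2)
    (hnorming : ∀ f : M → ℝ, (∃ K : NNReal, LipschitzWith K f) →
      lipNorm f = sSup {r : ℝ | ∃ p ∈ A, r = (f p.1 - f p.2) / dist p.1 p.2})
    (hseq : ∀ p ∈ A, ∃ x y : ℕ → N,
      (∀ n, φ (x n) ≠ φ (y n)) ∧
      Tendsto (fun n => φ (x n)) atTop (𝓝 p.1) ∧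
      Tendsto (fun n => φ (y n)) atTop (𝓝 p.2) ∧
      Tendsto (fun n => dist (φ (x n)) (φ (y n)) / dist (x n) (y n)) atTop (𝓝 1)) :
    ∀ f : M → ℝ, (∃ K : NNReal, LipschitzWith K f) → lipNorm (f ∘ φ) = lipNorm f := by
  rintro f ⟨K, hf⟩
  have hcomp : LipschitzWith (K * 1) (f ∘ φ) := hf.comp hφ
  have hLnn : 0 ≤ lipNorm f := lipNorm_nonneg hf
  have hCnn : 0 ≤ lipNorm (f ∘ φ) := lipNorm_nonneg hcomp
  apply le_antisymm
  · -- lipNorm (f ∘ φ) ≤ lipNorm f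
    apply Real.sSup_le _ hLnn
    rintro r ⟨x, y, hxy, rfl⟩
    by_cases h : φ x = φ y
    · simp only [Function.comp_apply, h, sub_self, zero_div]
      exact hLnn
    · have hd1 : (0:ℝ) < dist (φ x) (φ y) := dist_pos.2 h
      have hd2 : (0:ℝ) < dist x y := dist_pos.2 hxy
      set s := (f (φ x) - f (φ y)) / dist (φ x) (φ y) with hs
      set t := dist (φ x) (φ y) / dist x y with htdef
      have hst : (f ∘ φ) x - (f ∘ φ) y = s * t * dist x y := by
        simp only [Function.comp_apply, hs, htdef]
        field_simp
      have hsle : s ≤ lipNorm f := le_csSup (lip_bdd hf) ⟨φ x, φ y, h, rfl⟩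
      have ht0 : 0 ≤ t := div_nonneg hd1.le hd2.le
      have ht1 : t ≤ 1 := by
        rw [div_le_one hd2]
        simpa using hφ.dist_le_mul x y
      rw [hst, mul_div_assoc, div_self hd2.ne', mul_one]
      nlinarith [mul_nonneg (sub_nonneg.2 hsle) ht0, mul_nonneg hLnn (sub_nonneg.2 ht1)]
  · -- lipNorm f ≤ lipNorm (f ∘ φ)
    rw [hnorming f ⟨K, hf⟩]
    apply Real.sSup_le _ hCnn
    rintro r ⟨p, hp, rfl⟩
    obtain ⟨x, y, hne, hx, hy, hratio⟩ := hseq p hp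
    have hdp : (0:ℝ) < dist p.1 p.2 := dist_pos.2 (hA p hp)
    -- the sequence of difference quotients in N
    set g : ℕ → ℝ := fun n => (f (φ (x n)) - f (φ (y n))) / dist (x n) (y n) with hg
    have hgmem : ∀ n, g n ≤ lipNorm (f ∘ φ) := by
      intro n
      refine le_csSup (lip_bdd hcomp) ⟨x n, y n, ?_, rfl⟩
      intro hxy
      exact hne n (by rw [hxy])
    have hfact : Tendsto (fun n => (f (φ (x n)) - f (φ (y n))) / dist (φ (x n)) (φ (y n)))
        atTop (𝓝 ((f p.1 - f p.2) / dist p.1 p.2)) := by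
      apply Tendsto.div
      · exact (((hf.continuous.tendsto p.1).comp hx).sub ((hf.continuous.tendsto p.2).comp hy))
      · exact hx.dist hy
      · exact hdp.ne'
    have hgt : Tendsto g atTop (𝓝 ((f p.1 - f p.2) / dist p.1 p.2)) := by
      have heq : g = fun n => ((f (φ (x n)) - f (φ (y n))) / dist (φ (x n)) (φ (y n))) *
          (dist (φ (x n)) (φ (y n)) / dist (x n) (y n)) := by
        funext n
        have hd1 : (0:ℝ) < dist (φ (x n)) (φ (y n)) := dist_pos.2 (hne n)
        simp only [hg]
        rw [div_mul_div_comm, mul_comm (dist (φ (x n)) (φ (y n))),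
          mul_div_mul_right _ _ hd1.ne']
      rw [heq]
      have := hfact.mul hratio
      simpa using this
    exact le_of_tendsto hgt (Eventually.of_forall hgmem)
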